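/- Let L₁, K₁,...,Kₙ be star bodies in ℝⁿ, p ≥ 1, 1 ≤ r ≤ n. Define Ṽ_{-p}(L₁,K₁,...,Kₙ) = (1/n)∫_{S^{n-1}} ρ(K₁,u)^{-p} ρ(L₁,u)^{1+p} ρ(K₂,u)···ρ(Kₙ,u) dS(u). Then Ṽ(L₁,K₂,...,Kₙ)^{p+1} / Ṽ_{-p}(L₁,K₁,K₂,...,Kₙ) ≤ ∏_{i=1}^r Ṽ(Kᵢ,...,Kᵢ,K_{r+1},...,Kₙ)^{p/r}. -/

import Mathlib

open MeasureTheory Metric Real Set Finset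

/-- The surface (spherical) measure on the unit sphere `S^{n-1} ⊆ ℝⁿ`. -/
noncomputable def sphereσ (n : ℕ) : Measure (sphere (0 : EuclideanSpace ℝ (Fin n)) 1) :=
  μH[(n : ℝ) - 1]

private lemma lint_ne_top {X : Type*} [MeasurableSpace X] [TopologicalSpace X]
    [CompactSpace X] (hne : Nonempty X) {μ : Measure X} (hμ : μ Set.univ ≠ ⊤)
    {f : X → ℝ} (hf : Continuous f) :
    ∫⁻ x, ENNReal.ofReal (f x) ∂μ ≠ ⊤ := by
  haveI := hne
  obtain ⟨x0, -, hx0⟩ := isCompact_univ.exists_isMaxOn Set.univ_nonempty hf.continuousOn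
  have hle : ∫⁻ x, ENNReal.ofReal (f x) ∂μ ≤ ENNReal.ofReal (f x0) * μ Set.univ := by
    calc ∫⁻ x, ENNReal.ofReal (f x) ∂μ
        ≤ ∫⁻ _, ENNReal.ofReal (f x0) ∂μ :=
          lintegral_mono fun x => ENNReal.ofReal_le_ofReal (hx0 (Set.mem_univ x))
      _ = ENNReal.ofReal (f x0) * μ Set.univ := lintegral_const _
  exact ne_top_of_le_ne_top (ENNReal.mul_ne_top ENNReal.ofReal_ne_top hμ) hle

private lemma rpow_key1 {x y z p : ℝ} (hx : 0 < x) (hy : 0 < y) (hz : 0 < z)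
    (hq : 0 < 1 + p) :
    (x ^ (-p) * y ^ (1 + p) * z) ^ (1 / (1 + p)) * (x * z) ^ (p / (1 + p)) = y * z := by
  have hq' : (1 + p) ≠ 0 := hq.ne'
  have hxp : (0:ℝ) < x ^ (-p) := Real.rpow_pos_of_pos hx _
  have hyp : (0:ℝ) < y ^ (1 + p) := Real.rpow_pos_of_pos hy _
  rw [Real.mul_rpow (by positivity) hz.le, Real.mul_rpow hxp.le hyp.le,
      Real.mul_rpow hx.le hz.le, ← Real.rpow_mul hx.le, ← Real.rpow_mul hy.le,
      mul_one_div_cancel hq', Real.rpow_one]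
  have h1 : -p * (1 / (1 + p)) + p / (1 + p) = 0 := by field_simp; ring
  have h2 : 1 / (1 + p) + p / (1 + p) = 1 := by
    rw [← add_div, div_self hq']
  calc x ^ (-p * (1 / (1 + p))) * y * z ^ (1 / (1 + p))
        * (x ^ (p / (1 + p)) * z ^ (p / (1 + p)))
      = (x ^ (-p * (1 / (1 + p))) * x ^ (p / (1 + p)))
        * ((z ^ (1 / (1 + p)) * z ^ (p / (1 + p))) * y) := by ring
    _ = y * z := by
        rw [← Real.rpow_add hx, ← Real.rpow_add hz, h1, h2, Real.rpow_zero,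
          Real.rpow_one]
        ring

private lemma icc_eq_ioc (a b : ℕ) : Finset.Icc (a + 1) b = Finset.Ioc a b := by
  ext x; simp only [Finset.mem_Icc, Finset.mem_Ioc]; omega

private lemma prod_split {n r : ℕ} (hr1 : 1 ≤ r) (hrn : r ≤ n) (a : ℕ → ℝ) :
    (∏ i ∈ Finset.Icc 1 r, a i) * ∏ j ∈ Finset.Icc (r + 1) n, a j
      = a 1 * ∏ j ∈ Finset.Icc 2 n, a j := by
  have hn : 1 ≤ n := hr1.trans hrn
  have e1 : Finset.Icc 1 r = Finset.Ioc 0 r := icc_eq_ioc 0 r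
  have e2 : Finset.Icc 2 n = Finset.Ioc 1 n := icc_eq_ioc 1 n
  have e3 : Finset.Icc (r + 1) n = Finset.Ioc r n := icc_eq_ioc r n
  have e4 : Finset.Ioc 0 1 = ({1} : Finset ℕ) := by
    ext x; simp only [Finset.mem_Ioc, Finset.mem_singleton]; omega
  rw [e1, e2, e3, Finset.prod_Ioc_consecutive _ (Nat.zero_le r) hrn,
    ← Finset.prod_Ioc_consecutive _ (Nat.zero_le 1) hn, e4, Finset.prod_singleton]

private lemma prod_key2 {n r : ℕ} (hr1 : 1 ≤ r) (hrn : r ≤ n)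
    (a : ℕ → ℝ) (ha : ∀ i, 1 ≤ i → i ≤ n → 0 < a i) :
    ∏ i ∈ Finset.Icc 1 r, ((a i ^ r) * ∏ j ∈ Finset.Icc (r + 1) n, a j) ^ (1 / (r:ℝ))
      = a 1 * ∏ j ∈ Finset.Icc 2 n, a j := by
  have hr0 : (r:ℝ) ≠ 0 := Nat.cast_ne_zero.mpr (by omega)
  have hQpos : 0 < ∏ j ∈ Finset.Icc (r + 1) n, a j := by
    refine Finset.prod_pos fun j hj => ?_
    obtain ⟨h1j, h2j⟩ := Finset.mem_Icc.mp hj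
    exact ha j (by omega) h2j
  have key : ∀ i ∈ Finset.Icc 1 r,
      ((a i ^ r) * ∏ j ∈ Finset.Icc (r + 1) n, a j) ^ (1 / (r:ℝ))
        = a i * (∏ j ∈ Finset.Icc (r + 1) n, a j) ^ (1 / (r:ℝ)) := by
    intro i hi
    obtain ⟨h1i, h2i⟩ := Finset.mem_Icc.mp hi
    have hai : 0 < a i := ha i h1i (h2i.trans hrn)
    rw [Real.mul_rpow (by positivity) hQpos.le, ← Real.rpow_natCast (a i) r,
      ← Real.rpow_mul hai.le, mul_one_div_cancel hr0, Real.rpow_one]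
  rw [Finset.prod_congr rfl key, Finset.prod_mul_distrib, Finset.prod_const,
    Nat.card_Icc]
  have hcard : r + 1 - 1 = r := by omega
  rw [hcard]
  have hQpow : ((∏ j ∈ Finset.Icc (r + 1) n, a j) ^ (1 / (r:ℝ))) ^ r
      = ∏ j ∈ Finset.Icc (r + 1) n, a j := by
    rw [← Real.rpow_natCast _ r, ← Real.rpow_mul hQpos.le, one_div_mul_cancel hr0,
      Real.rpow_one]
  rw [hQpow, prod_split hr1 hrn a]

/-- The `L_p` dual Aleksandrov–Fenchel inequality:
`Ṽ(L₁,K₂,...,Kₙ)^{p+1}/Ṽ₋ₚ(L₁,K₁,K₂,...,Kₙ) ≤ ∏_{i=1}^r Ṽ(Kᵢ[r],K_{r+1},...,Kₙ)^{p/r}`.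
The star bodies `K₁,...,Kₙ` have radial functions `ρ 1, ..., ρ n`. -/
theorem Lp_dual_aleksandrov_fenchel
    (n r : ℕ) (hr1 : 1 ≤ r) (hrn : r ≤ n)
    (p : ℝ) (hp : 1 ≤ p)
    (ρL : sphere (0 : EuclideanSpace ℝ (Fin n)) 1 → ℝ)
    (ρ : ℕ → (sphere (0 : EuclideanSpace ℝ (Fin n)) 1 → ℝ))
    (hLc : Continuous ρL) (hLpos : ∀ u, 0 < ρL u)
    (hc : ∀ i, 1 ≤ i → i ≤ n → Continuous (ρ i))
    (hpos : ∀ i, 1 ≤ i → i ≤ n → ∀ u, 0 < ρ i u)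
    (Vmp VL : ℝ) (VAF : ℕ → ℝ)
    (hVmp : Vmp = (1 / n) * ∫ u,
      (ρ 1 u) ^ (-p) * (ρL u) ^ (1 + p) * ∏ j ∈ Finset.Icc 2 n, ρ j u ∂(sphereσ n))
    (hVL : VL = (1 / n) * ∫ u, ρL u * ∏ j ∈ Finset.Icc 2 n, ρ j u ∂(sphereσ n))
    (hVAF : ∀ i, VAF i =
      (1 / n) * ∫ u, (ρ i u) ^ r * ∏ j ∈ Finset.Icc (r + 1) n, ρ j u ∂(sphereσ n)) :
    VL ^ (p + 1) / Vmp ≤ ∏ i ∈ Finset.Icc 1 r, (VAF i) ^ (p / r) := by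
  classical
  have hn : 1 ≤ n := hr1.trans hrn
  have hr0 : (r:ℝ) ≠ 0 := Nat.cast_ne_zero.mpr (by omega)
  have hn0 : (0:ℝ) < n := by exact_mod_cast Nat.lt_of_lt_of_le Nat.zero_lt_one hn
  have hN : (0:ℝ) < 1 / n := by positivity
  have hq : (0:ℝ) < 1 + p := by linarith
  have hq' : (1 + p) ≠ 0 := hq.ne'
  set μ : Measure (sphere (0 : EuclideanSpace ℝ (Fin n)) 1) := sphereσ n with hμdef
  have hne : Nonempty (sphere (0 : EuclideanSpace ℝ (Fin n)) 1) := by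
    refine ⟨⟨EuclideanSpace.single (⟨0, by omega⟩ : Fin n) (1:ℝ), ?_⟩⟩
    rw [mem_sphere_zero_iff_norm, EuclideanSpace.norm_single]
    exact norm_one
  haveI := hne
  -- continuity and positivity of the building blocks
  have hcP : Continuous fun u => ∏ j ∈ Finset.Icc 2 n, ρ j u := by
    refine continuous_finset_prod _ fun j hj => ?_
    obtain ⟨h1j, h2j⟩ := Finset.mem_Icc.mp hj
    exact hc j (by omega) h2j
  have hPpos : ∀ u, 0 < ∏ j ∈ Finset.Icc 2 n, ρ j u := fun u => by
    refine Finset.prod_pos fun j hj => ?_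
    obtain ⟨h1j, h2j⟩ := Finset.mem_Icc.mp hj
    exact hpos j (by omega) h2j u
  have hcQ : Continuous fun u => ∏ j ∈ Finset.Icc (r + 1) n, ρ j u := by
    refine continuous_finset_prod _ fun j hj => ?_
    obtain ⟨h1j, h2j⟩ := Finset.mem_Icc.mp hj
    exact hc j (by omega) h2j
  have hQpos : ∀ u, 0 < ∏ j ∈ Finset.Icc (r + 1) n, ρ j u := fun u => by
    refine Finset.prod_pos fun j hj => ?_
    obtain ⟨h1j, h2j⟩ := Finset.mem_Icc.mp hj
    exact hpos j (by omega) h2j u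
  have hc1 : Continuous (ρ 1) := hc 1 le_rfl hn
  have h1pos : ∀ u, 0 < ρ 1 u := hpos 1 le_rfl hn
  have hF0c : Continuous fun u =>
      (ρ 1 u) ^ (-p) * (ρL u) ^ (1 + p) * ∏ j ∈ Finset.Icc 2 n, ρ j u :=
    ((hc1.rpow_const fun u => Or.inl (h1pos u).ne').mul
      (hLc.rpow_const fun u => Or.inl (hLpos u).ne')).mul hcP
  have hF0pos : ∀ u,
      0 < (ρ 1 u) ^ (-p) * (ρL u) ^ (1 + p) * ∏ j ∈ Finset.Icc 2 n, ρ j u := fun u =>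
    mul_pos (mul_pos (Real.rpow_pos_of_pos (h1pos u) _)
      (Real.rpow_pos_of_pos (hLpos u) _)) (hPpos u)
  have hFBc : Continuous fun u => ρL u * ∏ j ∈ Finset.Icc 2 n, ρ j u := hLc.mul hcP
  have hFBpos : ∀ u, 0 < ρL u * ∏ j ∈ Finset.Icc 2 n, ρ j u := fun u =>
    mul_pos (hLpos u) (hPpos u)
  have hFCc : Continuous fun u => ρ 1 u * ∏ j ∈ Finset.Icc 2 n, ρ j u := hc1.mul hcP
  have hFCpos : ∀ u, 0 < ρ 1 u * ∏ j ∈ Finset.Icc 2 n, ρ j u := fun u =>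
    mul_pos (h1pos u) (hPpos u)
  have hFDc : ∀ i ∈ Finset.Icc 1 r,
      Continuous fun u => (ρ i u) ^ r * ∏ j ∈ Finset.Icc (r + 1) n, ρ j u := by
    intro i hi
    obtain ⟨h1i, h2i⟩ := Finset.mem_Icc.mp hi
    exact ((hc i h1i (h2i.trans hrn)).pow r).mul hcQ
  have hFDpos : ∀ i ∈ Finset.Icc 1 r, ∀ u,
      0 < (ρ i u) ^ r * ∏ j ∈ Finset.Icc (r + 1) n, ρ j u := by
    intro i hi u
    obtain ⟨h1i, h2i⟩ := Finset.mem_Icc.mp hi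
    exact mul_pos (pow_pos (hpos i h1i (h2i.trans hrn) u) r) (hQpos u)
  -- the lintegrals
  set A := ∫⁻ u, ENNReal.ofReal
    ((ρ 1 u) ^ (-p) * (ρL u) ^ (1 + p) * ∏ j ∈ Finset.Icc 2 n, ρ j u) ∂μ with hA
  set B := ∫⁻ u, ENNReal.ofReal (ρL u * ∏ j ∈ Finset.Icc 2 n, ρ j u) ∂μ with hB
  set C := ∫⁻ u, ENNReal.ofReal (ρ 1 u * ∏ j ∈ Finset.Icc 2 n, ρ j u) ∂μ with hC
  set D : ℕ → ENNReal := fun i => ∫⁻ u, ENNReal.ofReal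
    ((ρ i u) ^ r * ∏ j ∈ Finset.Icc (r + 1) n, ρ j u) ∂μ with hD
  -- expressing the real integrals through lintegrals
  have hVmp' : Vmp = (1 / n) * A.toReal := by
    rw [hVmp, integral_eq_lintegral_of_nonneg_ae
      (Filter.Eventually.of_forall fun u => (hF0pos u).le) hF0c.aestronglyMeasurable]
  have hVL' : VL = (1 / n) * B.toReal := by
    rw [hVL, integral_eq_lintegral_of_nonneg_ae
      (Filter.Eventually.of_forall fun u => (hFBpos u).le) hFBc.aestronglyMeasurable]
  have hVAF' : ∀ i ∈ Finset.Icc 1 r, VAF i = (1 / n) * (D i).toReal := by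
    intro i hi
    rw [hVAF i, integral_eq_lintegral_of_nonneg_ae
      (Filter.Eventually.of_forall fun u => (hFDpos i hi u).le)
      (hFDc i hi).aestronglyMeasurable]
  -- right-hand side is nonnegative
  have hRHS : 0 ≤ ∏ i ∈ Finset.Icc 1 r, (VAF i) ^ (p / r) := by
    refine Finset.prod_nonneg fun i hi => Real.rpow_nonneg ?_ _
    rw [hVAF' i hi]
    positivity
  -- trivial case : Vmp = 0
  have hVmpnn : 0 ≤ Vmp := by rw [hVmp']; positivity
  rcases hVmpnn.eq_or_lt with h0 | hVmppos
  · rw [← h0, div_zero]; exact hRHS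
  -- now Vmp > 0, so A is finite and positive; the measure is finite
  have haA : 0 < A.toReal := by
    by_contra h
    push_neg at h
    nlinarith [hVmp' ▸ hVmppos]
  have hAtop : A ≠ ⊤ := by
    intro h
    rw [h, ENNReal.toReal_top] at haA
    exact lt_irrefl _ haA
  have hμfin : μ Set.univ ≠ ⊤ := by
    obtain ⟨x0, -, hx0⟩ := isCompact_univ.exists_isMinOn Set.univ_nonempty
      hF0c.continuousOn
    intro htop
    apply hAtop
    have hle : ENNReal.ofReal
        ((ρ 1 x0) ^ (-p) * (ρL x0) ^ (1 + p) * ∏ j ∈ Finset.Icc 2 n, ρ j x0)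
        * μ Set.univ ≤ A := by
      rw [hA, ← lintegral_const]
      exact lintegral_mono fun u => ENNReal.ofReal_le_ofReal (hx0 (Set.mem_univ u))
    rw [htop, ENNReal.mul_top
      (by simpa [ENNReal.ofReal_eq_zero, not_le] using hF0pos x0)] at hle
    exact top_le_iff.mp hle
  have hBtop : B ≠ ⊤ := lint_ne_top hne hμfin hFBc
  have hCtop : C ≠ ⊤ := lint_ne_top hne hμfin hFCc
  have hDtop : ∀ i ∈ Finset.Icc 1 r, D i ≠ ⊤ := fun i hi =>
    lint_ne_top hne hμfin (hFDc i hi)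
  -- measurability in ℝ≥0∞
  have hmeas0 : AEMeasurable (fun u => ENNReal.ofReal
      ((ρ 1 u) ^ (-p) * (ρL u) ^ (1 + p) * ∏ j ∈ Finset.Icc 2 n, ρ j u)) μ :=
    (ENNReal.continuous_ofReal.comp hF0c).aemeasurable
  have hmeasC : AEMeasurable (fun u => ENNReal.ofReal
      (ρ 1 u * ∏ j ∈ Finset.Icc 2 n, ρ j u)) μ :=
    (ENNReal.continuous_ofReal.comp hFCc).aemeasurable
  -- Hölder, step 1
  have hsum1 : 1 / (1 + p) + p / (1 + p) = 1 := by
    rw [← add_div, div_self hq']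
  have hh1 : B ≤ A ^ (1 / (1 + p)) * C ^ (p / (1 + p)) := by
    have hH := ENNReal.lintegral_mul_norm_pow_le hmeas0 hmeasC
      (by positivity) (by positivity) hsum1
    refine le_trans (le_of_eq ?_) hH
    rw [hB]
    refine lintegral_congr fun u => ?_
    rw [ENNReal.ofReal_rpow_of_pos (hF0pos u), ENNReal.ofReal_rpow_of_pos (hFCpos u),
      ← ENNReal.ofReal_mul (Real.rpow_nonneg (hF0pos u).le _),
      rpow_key1 (h1pos u) (hLpos u) (hPpos u) hq]
  -- Hölder, step 2
  have hsum2 : ∑ _i ∈ Finset.Icc 1 r, 1 / (r:ℝ) = 1 := by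
    rw [Finset.sum_const, Nat.card_Icc]
    have : r + 1 - 1 = r := by omega
    rw [this, nsmul_eq_mul, mul_one_div_cancel hr0]
  have hh2 : C ≤ ∏ i ∈ Finset.Icc 1 r, (D i) ^ (1 / (r:ℝ)) := by
    have hmeasD : ∀ i ∈ Finset.Icc 1 r, AEMeasurable (fun u => ENNReal.ofReal
        ((ρ i u) ^ r * ∏ j ∈ Finset.Icc (r + 1) n, ρ j u)) μ := fun i hi =>
      (ENNReal.continuous_ofReal.comp (hFDc i hi)).aemeasurable
    have hH := ENNReal.lintegral_prod_norm_pow_le (Finset.Icc 1 r) hmeasD hsum2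
      (fun i _ => by positivity)
    refine le_trans (le_of_eq ?_) hH
    rw [hC]
    refine lintegral_congr fun u => ?_
    have e : ∀ i ∈ Finset.Icc 1 r,
        ENNReal.ofReal ((ρ i u) ^ r * ∏ j ∈ Finset.Icc (r + 1) n, ρ j u) ^ (1 / (r:ℝ))
          = ENNReal.ofReal
            (((ρ i u) ^ r * ∏ j ∈ Finset.Icc (r + 1) n, ρ j u) ^ (1 / (r:ℝ))) :=
      fun i hi => ENNReal.ofReal_rpow_of_pos (hFDpos i hi u)
    rw [Finset.prod_congr rfl e, ← ENNReal.ofReal_prod_of_nonneg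
      (fun i hi => Real.rpow_nonneg (hFDpos i hi u).le _),
      prod_key2 hr1 hrn (fun j => ρ j u) (fun j h1 h2 => hpos j h1 h2 u)]
  -- pass to real numbers
  have hbB : B.toReal ≤ A.toReal ^ (1 / (1 + p)) * C.toReal ^ (p / (1 + p)) := by
    have hfin : A ^ (1 / (1 + p)) * C ^ (p / (1 + p)) ≠ ⊤ :=
      ENNReal.mul_ne_top (ENNReal.rpow_ne_top_of_nonneg (by positivity) hAtop)
        (ENNReal.rpow_ne_top_of_nonneg (by positivity) hCtop)
    have := ENNReal.toReal_mono hfin hh1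
    rwa [ENNReal.toReal_mul, ← ENNReal.toReal_rpow, ← ENNReal.toReal_rpow] at this
  have hcC : C.toReal ≤ ∏ i ∈ Finset.Icc 1 r, (D i).toReal ^ (1 / (r:ℝ)) := by
    have hfin : ∏ i ∈ Finset.Icc 1 r, (D i) ^ (1 / (r:ℝ)) ≠ ⊤ :=
      ENNReal.prod_ne_top fun i hi =>
        ENNReal.rpow_ne_top_of_nonneg (by positivity) (hDtop i hi)
    have h := ENNReal.toReal_mono hfin hh2
    rwa [ENNReal.toReal_prod, Finset.prod_congr rfl
      (fun i _ => (ENNReal.toReal_rpow (D i) (1 / (r:ℝ))).symm)] at h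
  -- real-number bookkeeping
  set a := A.toReal with ha
  set b := B.toReal with hbdef
  set c := C.toReal with hcdef
  set d : ℕ → ℝ := fun i => (D i).toReal with hddef
  have hbnn : 0 ≤ b := ENNReal.toReal_nonneg
  have hcnn : 0 ≤ c := ENNReal.toReal_nonneg
  have hdnn : ∀ i, 0 ≤ d i := fun i => ENNReal.toReal_nonneg
  -- b ^ (p + 1) ≤ a * c ^ p
  have hbp : b ^ (p + 1) ≤ a * c ^ p := by
    have e1 : (1 / (1 + p)) * (p + 1) = 1 := by
      rw [add_comm p 1, one_div, inv_mul_cancel₀ hq']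
    have e2 : (p / (1 + p)) * (p + 1) = p := by
      rw [add_comm p 1, div_mul_cancel₀ _ hq']
    calc b ^ (p + 1) ≤ (a ^ (1 / (1 + p)) * c ^ (p / (1 + p))) ^ (p + 1) :=
          Real.rpow_le_rpow hbnn hbB (by linarith)
      _ = a * c ^ p := by
          rw [Real.mul_rpow (Real.rpow_nonneg ENNReal.toReal_nonneg _)
            (Real.rpow_nonneg ENNReal.toReal_nonneg _),
            ← Real.rpow_mul ENNReal.toReal_nonneg, ← Real.rpow_mul ENNReal.toReal_nonneg,
            e1, e2, Real.rpow_one]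
  -- c ^ p ≤ ∏ d i ^ (p / r)
  have hcp : c ^ p ≤ ∏ i ∈ Finset.Icc 1 r, d i ^ (p / (r:ℝ)) := by
    have hW : (0:ℝ) ≤ ∏ i ∈ Finset.Icc 1 r, d i ^ (1 / (r:ℝ)) :=
      Finset.prod_nonneg fun i _ => Real.rpow_nonneg (hdnn i) _
    calc c ^ p ≤ (∏ i ∈ Finset.Icc 1 r, d i ^ (1 / (r:ℝ))) ^ p :=
          Real.rpow_le_rpow hcnn hcC (by linarith)
      _ = ∏ i ∈ Finset.Icc 1 r, d i ^ (p / (r:ℝ)) := by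
          rw [← Real.finset_prod_rpow _ _ (fun i _ => Real.rpow_nonneg (hdnn i) _)]
          refine Finset.prod_congr rfl fun i _ => ?_
          rw [← Real.rpow_mul (hdnn i)]
          congr 1
          ring
  -- assemble
  have hapos : 0 < a := haA
  rw [hVL', hVmp',
    show (∏ i ∈ Finset.Icc 1 r, VAF i ^ (p / (r:ℝ)))
        = ∏ i ∈ Finset.Icc 1 r, ((1 / (n:ℝ)) * d i) ^ (p / (r:ℝ)) from
      Finset.prod_congr rfl fun i hi => by rw [hVAF' i hi]]
  have hRHSeq : ∏ i ∈ Finset.Icc 1 r, ((1 / (n:ℝ)) * d i) ^ (p / (r:ℝ))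
      = (1 / (n:ℝ)) ^ p * ∏ i ∈ Finset.Icc 1 r, d i ^ (p / (r:ℝ)) := by
    have e : ∀ i ∈ Finset.Icc 1 r, ((1 / (n:ℝ)) * d i) ^ (p / (r:ℝ))
        = (1 / (n:ℝ)) ^ (p / (r:ℝ)) * d i ^ (p / (r:ℝ)) := fun i _ =>
      Real.mul_rpow hN.le (hdnn i)
    rw [Finset.prod_congr rfl e, Finset.prod_mul_distrib, Finset.prod_const,
      Nat.card_Icc]
    have hcard : r + 1 - 1 = r := by omega
    rw [hcard, ← Real.rpow_natCast ((1 / (n:ℝ)) ^ (p / (r:ℝ))) r,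
      ← Real.rpow_mul hN.le, div_mul_cancel₀ _ hr0]
  rw [hRHSeq, div_le_iff₀ (by positivity)]
  have hNp1 : (1 / (n:ℝ)) ^ (p + 1) = (1 / (n:ℝ)) ^ p * (1 / (n:ℝ)) := by
    rw [Real.rpow_add hN, Real.rpow_one]
  calc ((1 / (n:ℝ)) * b) ^ (p + 1) = (1 / (n:ℝ)) ^ (p + 1) * b ^ (p + 1) :=
        Real.mul_rpow hN.le hbnn
    _ ≤ (1 / (n:ℝ)) ^ (p + 1) * (a * c ^ p) := by
        exact mul_le_mul_of_nonneg_left hbp (Real.rpow_nonneg hN.le _)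
    _ = ((1 / (n:ℝ)) ^ p * c ^ p) * ((1 / (n:ℝ)) * a) := by rw [hNp1]; ring
    _ ≤ ((1 / (n:ℝ)) ^ p * ∏ i ∈ Finset.Icc 1 r, d i ^ (p / (r:ℝ)))
          * ((1 / (n:ℝ)) * a) := by
        refine mul_le_mul_of_nonneg_right ?_ (by positivity)
        exact mul_le_mul_of_nonneg_left hcp (Real.rpow_nonneg hN.le _)
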